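/- The disjoint union of cliques each of size at most (1-c)t is a (c,t)-sparse graph, contains no induced cycle of length at least 4, and if each clique has size exactly ⌊(1-c)t⌋ ≥ 2 and t = Ω(n), it has Ω(n^2) edges. -/
import Mathlib


open Finset

/-- Number of pairs `(a,b) ∈ A × B` with `{a,b}` an edge of `G`. -/
def epairs {V : Type*} [DecidableEq V] (G : SimpleGraph V) [DecidableRel G.Adj]
    (A B : Finset V) : ℕ :=
  ((A ×ˢ B).filter fun p => G.Adj p.1 p.2).card

lemma mod_helper (k a : ℕ) (h : a < k) : (k + a) % k = a := by
  rw [Nat.add_mod_left, Nat.mod_eq_of_lt h]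

lemma cyc_adj01 (k : ℕ) :
    (SimpleGraph.cycleGraph (k+4)).Adj ⟨0, by omega⟩ ⟨1, by omega⟩ := by
  rw [SimpleGraph.cycleGraph_adj']
  simp only [Fin.sub_def]
  right
  have h : k + 4 - 0 + 1 = (k + 4) + 1 := by omega
  rw [h, mod_helper _ _ (by omega)]

lemma cyc_adj12 (k : ℕ) :
    (SimpleGraph.cycleGraph (k+4)).Adj ⟨1, by omega⟩ ⟨2, by omega⟩ := by
  rw [SimpleGraph.cycleGraph_adj']
  simp only [Fin.sub_def]
  right
  have h : k + 4 - 1 + 2 = (k + 4) + 1 := by omega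
  rw [h, mod_helper _ _ (by omega)]

lemma cyc_nadj02 (k : ℕ) :
    ¬ (SimpleGraph.cycleGraph (k+4)).Adj ⟨0, by omega⟩ ⟨2, by omega⟩ := by
  rw [SimpleGraph.cycleGraph_adj']
  simp only [Fin.sub_def]
  push_neg
  constructor
  · have h : k + 4 - 2 + 0 = k + 2 := by omega
    rw [h, Nat.mod_eq_of_lt (by omega)]
    omega
  · have h : k + 4 - 0 + 2 = (k + 4) + 2 := by omega
    rw [h, mod_helper _ _ (by omega)]
    omega

/-- A disjoint union of cliques (fibers of `f`) each of size at most `(1-c)t` is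
`(c,t)`-sparse and contains no induced cycle of length at least `4`; moreover, if each
clique has size exactly `⌊(1-c)t⌋ ≥ 2` and `t = Ω(n)` (i.e. `n ≤ C·t`), it has `Ω(n²)`
edges. -/
theorem cliques_sparse_no_induced_cycle_many_edges (c C : ℝ)
    (hc0 : 0 < c) (hc1 : c < 1) (hC : 0 < C) :
    ∃ c' > (0 : ℝ),
      ∀ (V : Type) (_ : Fintype V) (_ : DecidableEq V)
        (ι : Type) (_ : DecidableEq ι) (f : V → ι)
        (G : SimpleGraph V) (_ : DecidableRel G.Adj) (t : ℝ),
        (∀ u v : V, G.Adj u v ↔ (u ≠ v ∧ f u = f v)) →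
        -- (1) if every clique has size at most (1-c)t, then G is (c,t)-sparse
        (((∀ v : V, ((Finset.univ.filter fun u => f u = f v).card : ℝ) ≤ (1 - c) * t) →
          ∀ A B : Finset V, t ≤ A.card → t ≤ B.card →
            (epairs G A B : ℝ) ≤ (1 - c) * A.card * B.card) ∧
        -- (2) G has no induced cycle of length at least 4
        (∀ m : ℕ, 4 ≤ m → IsEmpty (SimpleGraph.cycleGraph m ↪g G)) ∧
        -- (3) if every clique has size exactly ⌊(1-c)t⌋ ≥ 2 and n ≤ C·t,
        --     then G has at least c'·n² edges
        ((∀ v : V, (Finset.univ.filter fun u => f u = f v).card = ⌊(1 - c) * t⌋₊) →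
          2 ≤ ⌊(1 - c) * t⌋₊ →
          (Fintype.card V : ℝ) ≤ C * t →
          c' * (Fintype.card V : ℝ) ^ 2 ≤ (G.edgeFinset.card : ℝ))) := by
  refine ⟨(1 - c) / (8 * C), div_pos (by linarith) (by positivity), ?_⟩
  intro V _ _ ι _ f G _ t hAdj
  refine ⟨?_, ?_, ?_⟩
  · -- (1) sparsity
    intro hsize A B hA hB
    have h1 : (epairs G A B : ℝ) ≤ ∑ a ∈ A, ((Finset.univ.filter fun u => f u = f a).card : ℝ) := by
      have hnat : epairs G A B ≤ ∑ a ∈ A, (Finset.univ.filter fun u => f u = f a).card := by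
        unfold epairs
        rw [Finset.card_filter, Finset.sum_product]
        apply Finset.sum_le_sum
        intro a _
        calc (∑ b ∈ B, if G.Adj a b then 1 else 0)
            ≤ ∑ b ∈ B, (if f b = f a then 1 else 0) := by
              apply Finset.sum_le_sum
              intro b _
              by_cases h : G.Adj a b
              · simp [h, (((hAdj a b).1 h).2).symm]
              · simp [h]
          _ = (B.filter fun b => f b = f a).card := (Finset.card_filter _ _).symm
          _ ≤ (Finset.univ.filter fun u => f u = f a).card := by
              apply Finset.card_le_card
              exact Finset.filter_subset_filter _ (Finset.subset_univ B)
      calc (epairs G A B : ℝ)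
          ≤ ((∑ a ∈ A, (Finset.univ.filter fun u => f u = f a).card : ℕ) : ℝ) := by
            exact_mod_cast hnat
        _ = ∑ a ∈ A, ((Finset.univ.filter fun u => f u = f a).card : ℝ) := by push_cast; ring
    have h2 : (epairs G A B : ℝ) ≤ (A.card : ℝ) * ((1 - c) * t) := by
      calc (epairs G A B : ℝ) ≤ ∑ a ∈ A, ((Finset.univ.filter fun u => f u = f a).card : ℝ) := h1
        _ ≤ ∑ _a ∈ A, (1 - c) * t := Finset.sum_le_sum fun a _ => hsize a
        _ = (A.card : ℝ) * ((1 - c) * t) := by rw [Finset.sum_const, nsmul_eq_mul]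
    have hA0 : (0:ℝ) ≤ (A.card : ℝ) := Nat.cast_nonneg _
    nlinarith [mul_le_mul_of_nonneg_left hB (mul_nonneg (by linarith : (0:ℝ) ≤ 1 - c) hA0)]
  · -- (2) no induced cycles
    intro m hm
    obtain ⟨k, rfl⟩ : ∃ k, m = k + 4 := ⟨m - 4, by omega⟩
    constructor
    intro φ
    have h01 := (φ.map_adj_iff.2 (cyc_adj01 k))
    have h12 := (φ.map_adj_iff.2 (cyc_adj12 k))
    have h02 : ¬ G.Adj (φ ⟨0, by omega⟩) (φ ⟨2, by omega⟩) := by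
      intro h
      exact cyc_nadj02 k (φ.map_adj_iff.1 h)
    rw [hAdj] at h01 h12
    apply h02
    rw [hAdj]
    refine ⟨fun h => ?_, h01.2.trans h12.2⟩
    have := φ.injective h
    simp [Fin.ext_iff] at this
  · -- (3) many edges
    intro hsize hk hn
    set k := ⌊(1 - c) * t⌋₊ with hkdef
    set n := (Fintype.card V : ℝ) with hndef
    have hn0 : (0:ℝ) ≤ n := Nat.cast_nonneg _
    -- every degree is k - 1
    have hdeg : ∀ v : V, G.degree v = k - 1 := by
      intro v
      have hnb : G.neighborFinset v = (Finset.univ.filter fun u => f u = f v).erase v := by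
        ext u
        simp only [SimpleGraph.mem_neighborFinset, Finset.mem_erase, Finset.mem_filter,
          Finset.mem_univ, true_and, hAdj]
        constructor
        · rintro ⟨h1, h2⟩; exact ⟨Ne.symm h1, h2.symm⟩
        · rintro ⟨h1, h2⟩; exact ⟨Ne.symm h1, h2.symm⟩
      have hvmem : v ∈ Finset.univ.filter fun u => f u = f v := by simp
      rw [SimpleGraph.degree, hnb, Finset.card_erase_of_mem hvmem, hsize v]
    have hsum : ∑ v : V, G.degree v = 2 * G.edgeFinset.card :=
      SimpleGraph.sum_degrees_eq_twice_card_edges G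
    have hE : 2 * G.edgeFinset.card = Fintype.card V * (k - 1) := by
      rw [← hsum]
      simp [hdeg, Finset.sum_const, Finset.card_univ, smul_eq_mul]
    have hEr : 2 * (G.edgeFinset.card : ℝ) = n * ((k:ℝ) - 1) := by
      have h1k : 1 ≤ k := by omega
      have h2 : ((2 * G.edgeFinset.card : ℕ) : ℝ) = ((Fintype.card V * (k - 1) : ℕ) : ℝ) := by
        rw [hE]
      push_cast [Nat.cast_sub h1k] at h2
      linarith [h2]
    -- floor facts
    have hx2 : (2:ℝ) ≤ (1 - c) * t := by
      exact_mod_cast (Nat.le_floor_iff' (by norm_num)).mp hk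
    have hkx : (k:ℝ) ≤ (1 - c) * t := Nat.floor_le (by linarith)
    have hxk : (1 - c) * t < (k:ℝ) + 1 := Nat.lt_floor_add_one _
    have hk2 : (2:ℝ) ≤ (k:ℝ) := by exact_mod_cast hk
    have hquarter : (1 - c) * t / 4 ≤ (k:ℝ) - 1 := by linarith
    have ht : n / C ≤ t := by
      rw [div_le_iff₀ hC] at *
      linarith [hn]
    have hCn : (1 - c) * n ≤ 4 * C * ((k:ℝ) - 1) := by
      have h1 : (1 - c) * n ≤ (1 - c) * (C * t) :=
        mul_le_mul_of_nonneg_left hn (by linarith)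
      have h2 : (1 - c) * (C * t) = C * ((1 - c) * t) := by ring
      nlinarith [mul_le_mul_of_nonneg_left hquarter (le_of_lt hC)]
    rw [div_mul_eq_mul_div, div_le_iff₀ (by positivity : (0:ℝ) < 8 * C)]
    nlinarith [mul_le_mul_of_nonneg_right hCn hn0, hEr]
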